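/- For each finite word x ∈ Σ^∞ (ℓ(x) < ∞), each u ∈ ℝ≥0 and each v > 0, the formal ball (x, u+v) is way below (x, u) in the poset (BΣ^∞, ⊑_{q_b}). -/

import Mathlib

open scoped NNReal ENNReal

attribute [local instance] Classical.propDecidable

universe u

structure QuasiMetric (X : Type u) where
  d : X → X → ℝ≥0
  eq_iff : ∀ x y, (d x y = 0 ∧ d y x = 0) ↔ x = y
  triangle : ∀ x y z, d x y ≤ d x z + d z y

/-- The order on formal balls: `(x,r) ⊑ (y,s)` iff `d x y ≤ r - s` (real subtraction). -/
def BallLE {X : Type u} (d : X → X → ℝ≥0) (b c : X × ℝ≥0) : Prop :=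
  (d b.1 c.1 : ℝ) ≤ (b.2 : ℝ) - (c.2 : ℝ)

def IsUpperBound {β : Type*} (le : β → β → Prop) (D : Set β) (u : β) : Prop :=
  ∀ a ∈ D, le a u

def IsLub' {β : Type*} (le : β → β → Prop) (D : Set β) (u : β) : Prop :=
  IsUpperBound le D u ∧ ∀ v, IsUpperBound le D v → le u v

def DirectedSubset {β : Type*} (le : β → β → Prop) (D : Set β) : Prop :=
  D.Nonempty ∧ ∀ a ∈ D, ∀ b ∈ D, ∃ c ∈ D, le a c ∧ le b c

/-- `a` is way below `b`. -/
def WayBelow {β : Type*} (le : β → β → Prop) (a b : β) : Prop :=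
  ∀ D : Set β, DirectedSubset le D → ∀ s, IsLub' le D s → le b s → ∃ u ∈ D, le a u

def LeftKCauchyNet {X : Type u} {Λ : Type*} (d : X → X → ℝ≥0) (le : Λ → Λ → Prop)
    (f : Λ → X) : Prop :=
  ∀ ε : ℝ≥0, 0 < ε → ∃ a, ∀ b c, le a b → le b c → d (f b) (f c) < ε

/-- `x` is a Yoneda-limit of the net `f`: for all `y`, `d x y = inf_a sup_{b ≥ a} d (f b) y`
(computed in `ℝ≥0∞` so that the inf/sup always exist). -/
def IsYonedaLimit {X : Type u} {Λ : Type*} (d : X → X → ℝ≥0) (le : Λ → Λ → Prop)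
    (f : Λ → X) (x : X) : Prop :=
  ∀ y, (d x y : ℝ≥0∞) = ⨅ a : Λ, ⨆ b : Λ, ⨆ _ : le a b, (d (f b) y : ℝ≥0∞)

/-- Finite and infinite words over `α`: partial functions on `ℕ` with downward-closed domain. -/
def Word (α : Type u) : Type u := {f : ℕ → Option α // ∀ n, f n = none → f (n + 1) = none}

def emptyWord (α : Type u) : Word α := ⟨fun _ => none, fun _ _ => rfl⟩

/-- The prefix order on words. -/
def wpre {α : Type u} (x y : Word α) : Prop := ∀ n a, x.1 n = some a → y.1 n = some a

/-- The length of a word, in `ℕ∞`. -/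
noncomputable def wlen {α : Type u} (x : Word α) : ℕ∞ := ⨅ n ∈ {n : ℕ | x.1 n = none}, (n : ℕ∞)

/-- `pw n = 2^{-n}`, with `2^{-∞} = 0`. -/
noncomputable def pw (n : ℕ∞) : ℝ≥0 := if n = ⊤ then 0 else (2 : ℝ≥0)⁻¹ ^ n.toNat

/-- The balanced quasi-metric on words. -/
noncomputable def qb {α : Type u} (x y : Word α) : ℝ≥0 :=
  if wpre x y then pw (wlen x) - pw (wlen y) else 1

namespace Stmt12Aux

variable {α : Type u}

lemma word_none_mono (x : Word α) {m n : ℕ} (hmn : m ≤ n) (h : x.1 m = none) : x.1 n = none := by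
  induction hmn with
  | refl => exact h
  | step _ ih => exact x.2 _ ih

lemma wlen_le_iff {x : Word α} {n : ℕ} : wlen x ≤ (n : ℕ∞) ↔ x.1 n = none := by
  constructor
  · intro h
    by_contra hn
    have h1 : ((n + 1 : ℕ) : ℕ∞) ≤ wlen x := by
      apply le_iInf₂
      intro m hm
      have hm' : x.1 m = none := hm
      have hnm : n < m := by
        by_contra h'
        exact hn (word_none_mono x (not_lt.mp h') hm')
      exact_mod_cast Nat.succ_le_of_lt hnm
    have h2 : ((n + 1 : ℕ) : ℕ∞) ≤ (n : ℕ∞) := h1.trans h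
    have : n + 1 ≤ n := by exact_mod_cast h2
    omega
  · intro h
    exact iInf₂_le n h

lemma lt_wlen_iff {x : Word α} {n : ℕ} : (n : ℕ∞) < wlen x ↔ x.1 n ≠ none := by
  rw [lt_iff_not_ge, wlen_le_iff]

lemma wpre_wlen_le {x y : Word α} (h : wpre x y) : wlen x ≤ wlen y := by
  apply le_iInf₂
  intro n hn
  have hn' : y.1 n = none := hn
  have : x.1 n = none := by
    cases hx : x.1 n with
    | none => rfl
    | some a => rw [h n a hx] at hn'; cases hn'
  exact wlen_le_iff.mpr this

lemma wpre_of_both {x y z : Word α} (hx : wpre x z) (hy : wpre y z)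
    (hlen : wlen x ≤ wlen y) : wpre x y := by
  intro n a hxa
  have h1 : (n : ℕ∞) < wlen x := lt_wlen_iff.mpr (by simp [hxa])
  have h2 : (n : ℕ∞) < wlen y := h1.trans_le hlen
  have h3 : y.1 n ≠ none := lt_wlen_iff.mp h2
  cases hyb : y.1 n with
  | none => exact absurd hyb h3
  | some b =>
      have := hy n b hyb
      rw [hx n a hxa] at this
      exact congrArg some (Option.some.inj this).symm

lemma pw_le_one (n : ℕ∞) : pw n ≤ 1 := by
  rw [pw]
  split
  · exact zero_le_one
  · exact pow_le_one' (by norm_num) _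

lemma pw_pos {n : ℕ∞} (h : n ≠ ⊤) : 0 < pw n := by
  rw [pw, if_neg h]
  positivity

lemma pw_antitone {m n : ℕ∞} (h : m ≤ n) : pw n ≤ pw m := by
  by_cases hn : n = ⊤
  · simp [pw, hn]
  · have hm : m ≠ ⊤ := fun hm => hn (top_le_iff.mp (hm ▸ h))
    rw [pw, pw, if_neg hn, if_neg hm]
    exact pow_le_pow_of_le_one zero_le (by norm_num) (ENat.toNat_le_toNat h hn)

lemma le_of_pw_lt {m n : ℕ∞} (hn : n ≠ ⊤) (h : pw m < 2 * pw n) : n ≤ m := by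
  by_contra h'
  push_neg at h'
  have hm : m ≠ ⊤ := (h'.trans_le le_top).ne
  rw [pw, pw, if_neg hn, if_neg hm] at h
  have hmn : m.toNat + 1 ≤ n.toNat := by
    lift n to ℕ using hn
    lift m to ℕ using hm
    simp only [ENat.toNat_coe]
    have : m < n := by exact_mod_cast h'
    omega
  have h2 : (2 : ℝ≥0)⁻¹ ^ n.toNat ≤ (2 : ℝ≥0)⁻¹ ^ (m.toNat + 1) :=
    pow_le_pow_of_le_one zero_le (by norm_num) hmn
  have h3 : 2 * (2 : ℝ≥0)⁻¹ ^ (m.toNat + 1) = (2 : ℝ≥0)⁻¹ ^ m.toNat := by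
    rw [pow_succ]
    rw [mul_comm]
    rw [mul_assoc]
    norm_num
  have : 2 * (2 : ℝ≥0)⁻¹ ^ n.toNat ≤ (2 : ℝ≥0)⁻¹ ^ m.toNat := by
    calc 2 * (2 : ℝ≥0)⁻¹ ^ n.toNat ≤ 2 * (2 : ℝ≥0)⁻¹ ^ (m.toNat + 1) := by
          exact mul_le_mul_right h2 2
      _ = (2 : ℝ≥0)⁻¹ ^ m.toNat := h3
  exact absurd h (not_lt.mpr this)

lemma le_of_pw_le {m n : ℕ∞} (hn : n ≠ ⊤) (h : pw m ≤ pw n) : n ≤ m :=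
  le_of_pw_lt hn (h.trans_lt (by
    rw [two_mul]
    exact lt_add_of_pos_left _ (pw_pos hn)))

lemma qb_le_one (x y : Word α) : qb x y ≤ 1 := by
  rw [qb]
  split
  · exact le_trans tsub_le_self (pw_le_one _)
  · exact le_refl 1

lemma qb_coe_of_wpre {x y : Word α} (h : wpre x y) :
    (qb x y : ℝ) = (pw (wlen x) : ℝ) - (pw (wlen y) : ℝ) := by
  rw [qb, if_pos h, NNReal.coe_sub (pw_antitone (wpre_wlen_le h))]

lemma wpre_of_qb_lt_one {x y : Word α} (h : qb x y < 1) : wpre x y := by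
  by_contra h'
  rw [qb, if_neg h'] at h
  exact lt_irrefl 1 h



noncomputable def uw (S : Set (Word α)) : ℕ → Option α := fun n =>
  if h : ∃ y, y ∈ S ∧ (y.1 n).isSome then h.choose.1 n else none

lemma uw_some_iff {S : Set (Word α)} {n : ℕ} :
    (uw S n).isSome ↔ ∃ y, y ∈ S ∧ (y.1 n).isSome := by
  constructor
  · intro h
    rw [uw] at h
    split at h
    · next hc => exact ⟨hc.choose, hc.choose_spec.1, h⟩
    · simp at h
  · intro h
    rw [uw, dif_pos h]
    exact h.choose_spec.2

noncomputable def unionWord (S : Set (Word α)) : Word α := by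
  refine ⟨uw S, ?_⟩
  intro n h
  cases h2 : uw S (n + 1) with
  | none => rfl
  | some a =>
    exfalso
    have hs : (uw S (n + 1)).isSome := by simp [h2]
    obtain ⟨y, hyS, hy⟩ := uw_some_iff.mp hs
    have hyn : (y.1 n).isSome := by
      cases hn : y.1 n with
      | none => rw [y.2 n hn] at hy; simp at hy
      | some _ => simp
    have : (uw S n).isSome := uw_some_iff.mpr ⟨y, hyS, hyn⟩
    rw [h] at this
    simp at this

def Compat (S : Set (Word α)) : Prop := ∀ y ∈ S, ∀ y' ∈ S, ∃ c : Word α, wpre y c ∧ wpre y' c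

lemma wpre_unionWord {S : Set (Word α)} (hS : Compat S) {y : Word α} (hy : y ∈ S) :
    wpre y (unionWord S) := by
  intro n a ha
  have hcond : ∃ y', y' ∈ S ∧ (y'.1 n).isSome := ⟨y, hy, by simp [ha]⟩
  show uw S n = some a
  rw [uw, dif_pos hcond]
  obtain ⟨hS', hsome⟩ := hcond.choose_spec
  obtain ⟨b, hb⟩ := Option.isSome_iff_exists.mp hsome
  obtain ⟨c, h1, h2⟩ := hS y hy hcond.choose hS'
  have e1 := h1 n a ha
  have e2 := h2 n b hb
  rw [e1] at e2
  rw [hb]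
  exact congrArg some (Option.some.inj e2).symm

lemma unionWord_some {S : Set (Word α)} {n : ℕ} {a : α}
    (h : (unionWord S).1 n = some a) : ∃ y ∈ S, y.1 n = some a := by
  have h' : uw S n = some a := h
  rw [uw] at h'
  split at h'
  · next hc => exact ⟨hc.choose, hc.choose_spec.1, h'⟩
  · cases h'

lemma pw_coe (k : ℕ) : pw (k : ℕ∞) = (2 : ℝ≥0)⁻¹ ^ k := by
  rw [pw, if_neg (by exact_mod_cast WithTop.coe_ne_top)]
  simp

lemma exists_radius_lt (D : Set (Word α × ℝ≥0))
    (hD : DirectedSubset (BallLE (qb (α := α))) D) (z : Word α) (w : ℝ≥0)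
    (hlub : IsLub' (BallLE (qb (α := α))) D (z, w)) (ε : ℝ≥0) (hε : 0 < ε) :
    ∃ p ∈ D, (p.2 : ℝ) < (w : ℝ) + (ε : ℝ) := by
  classical
  set R : Set ℝ≥0 := (fun p : Word α × ℝ≥0 => p.2) '' D with hR
  have hRne : R.Nonempty := hD.1.image _
  set w₀ : ℝ≥0 := sInf R with hw₀
  have hw₀le : ∀ p ∈ D, w₀ ≤ p.2 := fun p hp => csInf_le (OrderBot.bddBelow R) ⟨p, hp, rfl⟩
  suffices hs : w₀ ≤ w by
    have hlt : w₀ < w + ε := hs.trans_lt (lt_add_of_pos_right w hε)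
    obtain ⟨r, hrR, hr⟩ := exists_lt_of_csInf_lt hRne hlt
    obtain ⟨p, hp, rfl⟩ := hrR
    exact ⟨p, hp, by exact_mod_cast hr⟩
  set E : Set (Word α) := {y | ∃ r : ℝ≥0, (y, r) ∈ D ∧ (r : ℝ) < (w₀ : ℝ) + 1} with hE
  have hcom : ∀ p ∈ D, ∀ q ∈ D, (p.2 : ℝ) < (w₀ : ℝ) + 1 → (q.2 : ℝ) < (w₀ : ℝ) + 1 →
      ∃ c ∈ D, wpre p.1 c.1 ∧ wpre q.1 c.1 ∧
        (pw (wlen p.1) : ℝ) - (pw (wlen c.1) : ℝ) ≤ (p.2 : ℝ) - (w₀ : ℝ) := by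
    intro p hp q hq hpr hqr
    obtain ⟨c, hc, h1, h2⟩ := hD.2 p hp q hq
    rw [BallLE] at h1 h2
    have hwc : (w₀ : ℝ) ≤ c.2 := by exact_mod_cast hw₀le c hc
    have hp1 : (qb p.1 c.1 : ℝ) < 1 := by linarith
    have hq1 : (qb q.1 c.1 : ℝ) < 1 := by linarith
    have hpre1 : wpre p.1 c.1 := wpre_of_qb_lt_one (by exact_mod_cast hp1)
    have hpre2 : wpre q.1 c.1 := wpre_of_qb_lt_one (by exact_mod_cast hq1)
    refine ⟨c, hc, hpre1, hpre2, ?_⟩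
    rw [← qb_coe_of_wpre hpre1]
    linarith
  have hCompat : Compat E := by
    intro y hy y' hy'
    obtain ⟨r, hr, hr1⟩ := hy
    obtain ⟨r', hr', hr1'⟩ := hy'
    obtain ⟨c, _, h1, h2, _⟩ := hcom (y, r) hr (y', r') hr' hr1 hr1'
    exact ⟨c.1, h1, h2⟩
  set t := unionWord E with ht
  have hub : IsUpperBound (BallLE (qb (α := α))) D (t, w₀) := by
    intro p hp
    show (qb p.1 t : ℝ) ≤ (p.2 : ℝ) - (w₀ : ℝ)
    by_cases hbig : (w₀ : ℝ) + 1 ≤ (p.2 : ℝ)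
    · have h1 : (qb p.1 t : ℝ) ≤ 1 := by exact_mod_cast qb_le_one p.1 t
      linarith
    · push_neg at hbig
      have hpE : p.1 ∈ E := ⟨p.2, by simpa using hp, hbig⟩
      have hpret : wpre p.1 t := wpre_unionWord hCompat hpE
      rw [qb_coe_of_wpre hpret]
      have hw0p : (w₀ : ℝ) ≤ p.2 := by exact_mod_cast hw₀le p hp
      have hkey : (pw (wlen p.1) : ℝ) - ((p.2 : ℝ) - (w₀ : ℝ)) ≤ (pw (wlen t) : ℝ) := by
        set cst : ℝ := (pw (wlen p.1) : ℝ) - ((p.2 : ℝ) - (w₀ : ℝ)) with hcst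
        rcases le_or_gt cst 0 with hcpos | hcpos
        · exact hcpos.trans (pw (wlen t)).coe_nonneg
        have hbound : ∀ y' ∈ E, cst ≤ (pw (wlen y') : ℝ) := by
          intro y' hy'
          obtain ⟨r', hy'D, hr'⟩ := hy'
          obtain ⟨c, hc, hp1, hp2, hqb⟩ := hcom p hp (y', r') hy'D hbig hr'
          have h1 : (pw (wlen c.1) : ℝ) ≤ (pw (wlen y') : ℝ) := by
            exact_mod_cast pw_antitone (wpre_wlen_le hp2)
          rw [hcst]
          linarith
        by_cases htop : wlen t = ⊤
        · exfalso
          obtain ⟨N, hN⟩ := exists_pow_lt_of_lt_one hcpos (by norm_num : (2 : ℝ)⁻¹ < 1)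
          have hlt : ((N : ℕ∞)) < wlen t := by rw [htop]; exact WithTop.coe_lt_top N
          have hsome : t.1 N ≠ none := lt_wlen_iff.mp hlt
          obtain ⟨a, ha⟩ := Option.ne_none_iff_exists'.mp hsome
          obtain ⟨y', hy'E, hy'⟩ := unionWord_some ha
          have hlen : ((N : ℕ∞)) < wlen y' := lt_wlen_iff.mpr (by simp [hy'])
          have hlen2 : ((N : ℕ∞)) + 1 ≤ wlen y' :=
            ENat.add_one_le_iff (by exact_mod_cast WithTop.coe_ne_top) |>.mpr hlen
          have hple : pw (wlen y') ≤ (2 : ℝ≥0)⁻¹ ^ (N + 1) := by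
            rw [← pw_coe (N + 1)]
            exact pw_antitone (by exact_mod_cast hlen2)
          have hple' : (pw (wlen y') : ℝ) ≤ (2 : ℝ)⁻¹ ^ (N + 1) := by
            exact_mod_cast hple
          have hb := hbound y' hy'E
          have hstep : ((2 : ℝ)⁻¹) ^ (N + 1) ≤ (2 : ℝ)⁻¹ ^ N := by
            apply pow_le_pow_of_le_one (by norm_num) (by norm_num)
            omega
          linarith
        · obtain ⟨n, hn⟩ : ∃ n : ℕ, wlen t = (n : ℕ∞) :=
            ⟨(wlen t).toNat, (ENat.coe_toNat htop).symm⟩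
          cases n with
          | zero =>
            have : pw (wlen t) = 1 := by rw [hn, pw_coe]; simp
            rw [this]
            have h1 : (pw (wlen p.1) : ℝ) ≤ 1 := by exact_mod_cast pw_le_one (wlen p.1)
            push_cast
            linarith
          | succ m =>
            have hlt : ((m : ℕ∞)) < wlen t := by
              rw [hn]
              exact_mod_cast Nat.lt_succ_self m
            have hsome : t.1 m ≠ none := lt_wlen_iff.mp hlt
            obtain ⟨a, ha⟩ := Option.ne_none_iff_exists'.mp hsome
            obtain ⟨y', hy'E, hy'⟩ := unionWord_some ha
            have hlen1 : ((m : ℕ∞)) < wlen y' := lt_wlen_iff.mpr (by simp [hy'])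
            have hlen2 : wlen y' ≤ wlen t := wpre_wlen_le (wpre_unionWord hCompat hy'E)
            have heq : wlen y' = wlen t := by
              apply le_antisymm hlen2
              rw [hn]
              have : ((m : ℕ∞)) + 1 ≤ wlen y' :=
                ENat.add_one_le_iff (by exact_mod_cast WithTop.coe_ne_top) |>.mpr hlen1
              exact_mod_cast this
            have := hbound y' hy'E
            rw [heq] at this
            exact this
      linarith
  have h2 := hlub.2 (t, w₀) hub
  rw [BallLE] at h2
  have h3 : (0 : ℝ) ≤ (qb z t : ℝ) := (qb z t).coe_nonneg
  have : (w₀ : ℝ) ≤ (w : ℝ) := by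
    simp only at h2
    linarith
  exact_mod_cast this

end Stmt12Aux


open Stmt12Aux

theorem stmt12 {α : Type u} (x : Word α) (hx : wlen x ≠ ⊤) (u v : ℝ≥0) (hv : 0 < v) :
    WayBelow (BallLE (qb (α := α))) (x, u + v) (x, u) := by
  intro D hD s hlub hle
  obtain ⟨z, w⟩ := s
  have hle' : (qb x z : ℝ) ≤ (u : ℝ) - (w : ℝ) := hle
  have hp : 0 < pw (wlen x) := pw_pos hx
  set ε : ℝ≥0 := min v (pw (wlen x)) with hε
  have hεpos : 0 < ε := lt_min hv hp
  obtain ⟨p, hpD, hpr⟩ := exists_radius_lt D hD z w hlub ε hεpos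
  refine ⟨p, hpD, ?_⟩
  have hub : (qb p.1 z : ℝ) ≤ (p.2 : ℝ) - (w : ℝ) := hlub.1 p hpD
  have hεv : (ε : ℝ) ≤ (v : ℝ) := by exact_mod_cast min_le_left _ _
  have hεp : (ε : ℝ) ≤ (pw (wlen x) : ℝ) := by exact_mod_cast min_le_right _ _
  have hq1 : (qb p.1 z : ℝ) < ε := by linarith
  have hqlt1 : qb p.1 z < 1 := by
    have h1 : (pw (wlen x) : ℝ) ≤ 1 := by exact_mod_cast pw_le_one _
    have : (qb p.1 z : ℝ) < 1 := by linarith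
    exact_mod_cast this
  have hyz : wpre p.1 z := wpre_of_qb_lt_one hqlt1
  show (qb x p.1 : ℝ) ≤ ((u + v : ℝ≥0) : ℝ) - (p.2 : ℝ)
  by_cases hxz : wpre x z
  · have hxzc := qb_coe_of_wpre hxz
    have hyzc := qb_coe_of_wpre hyz
    have hzx : (pw (wlen z) : ℝ) ≤ (pw (wlen x) : ℝ) := by
      exact_mod_cast pw_antitone (wpre_wlen_le hxz)
    have h2 : (pw (wlen p.1) : ℝ) < 2 * (pw (wlen x) : ℝ) := by
      rw [hyzc] at hub
      linarith
    have hlenxy : wlen x ≤ wlen p.1 := le_of_pw_lt hx (by exact_mod_cast h2)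
    have hxy : wpre x p.1 := wpre_of_both hxz hyz hlenxy
    rw [qb_coe_of_wpre hxy]
    have hyx : (pw (wlen z) : ℝ) ≤ (pw (wlen p.1) : ℝ) := by
      exact_mod_cast pw_antitone (wpre_wlen_le hyz)
    rw [hxzc] at hle'
    push_cast
    linarith
  · have h1 : qb x z = 1 := by rw [qb, if_neg hxz]
    rw [h1] at hle'
    have hq : (qb x p.1 : ℝ) ≤ 1 := by exact_mod_cast qb_le_one _ _
    push_cast at hle' ⊢
    linarith
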